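/- arXiv:0908.4482 — 2 statements merged into one kernel-verified Lean document; each statement's English description precedes it below -/
import Mathlib

section
/- Suppose the polarity $\phi : \tilde A \to A^{**}$ is injective and there exists $w_0 \in \tilde A$ with $\phi(w_0) = \iota(1_A)$. Then $w * w_0 = w(1_A)\, w_0 = w_0 * w$ for all $w \in A^*$, $\mathrm{tr}(w * w_0) = w(1_A)\, w_0(1_A)$ for all $w \in A^*$, and $w_0(1_A) = 1$; hence $w_0$ is a normalized invariant integral on $G$ and $G$ is linearly semisimple. -/
open TensorProduct

noncomputable section

variable {K : Type} [Field K] {A : Type} [CommRing A] [HopfAlgebra K A]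

/-- Convolution product on the dual of a coalgebra:
`(w * w') a = ∑ w a₍₁₎ * w' a₍₂₎`. -/
def conv (w w' : Module.Dual K A) : Module.Dual K A :=
  (LinearMap.mul' K K).comp ((TensorProduct.map w w').comp (Coalgebra.comul (R := K)))

/-- Left convolution by `u`, as a linear endomorphism of the dual. -/
def convL (u : Module.Dual K A) : Module.Dual K A →ₗ[K] Module.Dual K A where
  toFun := conv u
  map_add' x y := by
    unfold conv
    rw [TensorProduct.map_add_right, LinearMap.add_comp, LinearMap.comp_add]
  map_smul' c x := by
    show (LinearMap.mul' K K).comp ((TensorProduct.map u (c • x)).comp (Coalgebra.comul (R := K))) =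
      c • (LinearMap.mul' K K).comp ((TensorProduct.map u x).comp (Coalgebra.comul (R := K)))
    rw [TensorProduct.map_smul_right, LinearMap.smul_comp, LinearMap.comp_smul]

/-- The span of `{u * w' : w' ∈ A*}`. -/
def rightOrbit (u : Module.Dual K A) : Submodule K (Module.Dual K A) :=
  Submodule.span K {x | ∃ w', x = conv u w'}

lemma rightOrbit_mapsTo (u : Module.Dual K A) :
    ∀ x ∈ rightOrbit u, convL u x ∈ rightOrbit u := by
  intro x hx
  have h : Submodule.map (convL u) (rightOrbit u) ≤ rightOrbit u := by
    rw [rightOrbit, Submodule.map_span]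
    apply Submodule.span_mono
    rintro y ⟨x, ⟨w', rfl⟩, rfl⟩
    exact ⟨conv u w', rfl⟩
  exact h ⟨x, hx, rfl⟩

/-- The trace of the finite-rank operator "left convolution by `u`", computed as the trace of
its restriction to the finite-dimensional invariant subspace `u * A*` containing its image. -/
def convTrace (u : Module.Dual K A) : K :=
  LinearMap.trace K (rightOrbit u) ((convL u).restrict (rightOrbit_mapsTo u))

/-- The span of `{w₁ * w * w₂ : w₁, w₂ ∈ A*}`. -/
def twoSidedOrbit (w : Module.Dual K A) : Submodule K (Module.Dual K A) :=
  Submodule.span K {x | ∃ w₁ w₂, x = conv w₁ (conv w w₂)}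

/-- `Ã = {w ∈ A* : dim_K (A* * w * A*) < ∞}`. -/
def tildeSet (K : Type) [Field K] (A : Type) [CommRing A] [HopfAlgebra K A] :
    Set (Module.Dual K A) :=
  {w | FiniteDimensional K (twoSidedOrbit w)}

/-- A normalized invariant integral on `G = Spec A`:  `w_G(1) = 1` and
`w * w_G = w(1) w_G = w_G * w` for all `w ∈ A*`. -/
def IsNormalizedIntegral (wG : Module.Dual K A) : Prop :=
  wG 1 = 1 ∧ ∀ w : Module.Dual K A, conv w wG = w 1 • wG ∧ conv wG w = w 1 • wG

section AuxLemmas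

lemma conv_apply_repr (w w' : Module.Dual K A) (a : A) {ι : Type*} (r : Coalgebra.Repr K a ι) :
    conv w w' a = ∑ i ∈ r.index, w (r.left i) * w' (r.right i) := by
  show (LinearMap.mul' K K) ((TensorProduct.map w w') (Coalgebra.comul a)) = _
  rw [← r.eq]
  simp [map_sum]

lemma counit_conv (w : Module.Dual K A) : conv Coalgebra.counit w = w := by
  ext a
  rw [conv_apply_repr _ _ a (Coalgebra.Repr.arbitrary K a)]
  have := Coalgebra.sum_counit_tmul_map_eq (R := K) w a (repr := Coalgebra.Repr.arbitrary K a)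
  apply_fun (LinearMap.mul' K K) at this
  rw [map_sum] at this
  simp only [LinearMap.mul'_apply, one_mul] at this
  exact this

lemma conv_counit (w : Module.Dual K A) : conv w Coalgebra.counit = w := by
  ext a
  rw [conv_apply_repr _ _ a (Coalgebra.Repr.arbitrary K a)]
  have := Coalgebra.sum_map_tmul_counit_eq (R := K) w a (repr := Coalgebra.Repr.arbitrary K a)
  apply_fun (LinearMap.mul' K K) at this
  rw [map_sum] at this
  simp only [LinearMap.mul'_apply, mul_one] at this
  exact this

lemma conv_assoc (u v w : Module.Dual K A) : conv (conv u v) w = conv u (conv v w) := by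
  ext a
  set r := Coalgebra.Repr.arbitrary K a with hr
  set a₁ : ∀ i : r.ι, Coalgebra.Repr K (r.left i) (A × A) := fun i => Coalgebra.Repr.arbitrary K _
  set a₂ : ∀ i : r.ι, Coalgebra.Repr K (r.right i) (A × A) := fun i => Coalgebra.Repr.arbitrary K _
  have key := Coalgebra.sum_map_tmul_tmul_eq (f := u) (g := v) (h := w) a
    (repr := r) (a₁ := a₁) (a₂ := a₂)
  apply_fun ((LinearMap.mul' K K).comp ((LinearMap.mul' K K).lTensor K)) at key
  simp only [map_sum, LinearMap.comp_apply, LinearMap.lTensor_tmul, TensorProduct.map_tmul,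
    LinearMap.mul'_apply] at key
  rw [conv_apply_repr (conv u v) w a r, conv_apply_repr u (conv v w) a r]
  calc ∑ i ∈ r.index, conv u v (r.left i) * w (r.right i)
      = ∑ i ∈ r.index, ∑ j ∈ (a₁ i).index,
          u ((a₁ i).left j) * (v ((a₁ i).right j) * w (r.right i)) := by
        refine Finset.sum_congr rfl fun i _ => ?_
        rw [conv_apply_repr u v _ (a₁ i), Finset.sum_mul]
        simp [mul_assoc]
    _ = ∑ i ∈ r.index, ∑ j ∈ (a₂ i).index,
          u (r.left i) * (v ((a₂ i).left j) * w ((a₂ i).right j)) := key.symm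
    _ = ∑ i ∈ r.index, u (r.left i) * conv v w (r.right i) := by
        refine Finset.sum_congr rfl fun i _ => ?_
        rw [conv_apply_repr v w _ (a₂ i), Finset.mul_sum]

lemma conv_one_apply (w w' : Module.Dual K A) : conv w w' (1 : A) = w 1 * w' 1 := by
  show (LinearMap.mul' K K) ((TensorProduct.map w w') (Coalgebra.comul (1 : A))) = _
  rw [Bialgebra.comul_one, Algebra.TensorProduct.one_def]
  simp

lemma conv_smul_left (c : K) (w w' : Module.Dual K A) :
    conv (c • w) w' = c • conv w w' := by
  unfold conv
  rw [TensorProduct.map_smul_left, LinearMap.smul_comp, LinearMap.comp_smul]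

lemma conv_smul_right (c : K) (w w' : Module.Dual K A) :
    conv w (c • w') = c • conv w w' := by
  unfold conv
  rw [TensorProduct.map_smul_right, LinearMap.smul_comp, LinearMap.comp_smul]

lemma conv_zero_left (w : Module.Dual K A) : conv 0 w = 0 := by
  unfold conv
  rw [TensorProduct.map_zero_left]
  simp

lemma conv_zero_right (w : Module.Dual K A) : conv w 0 = 0 := by
  unfold conv
  rw [TensorProduct.map_zero_right]
  simp

lemma conv_add_right (w x y : Module.Dual K A) :
    conv w (x + y) = conv w x + conv w y := (convL w).map_add x y

lemma conv_mem_rightOrbit (u x : Module.Dual K A) : conv u x ∈ rightOrbit u :=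
  Submodule.subset_span ⟨x, rfl⟩

lemma mem_twoSidedOrbit (w w₁ w₂ : Module.Dual K A) :
    conv w₁ (conv w w₂) ∈ twoSidedOrbit w :=
  Submodule.subset_span ⟨w₁, w₂, rfl⟩

lemma tilde_of_le {u v : Module.Dual K A} (h : twoSidedOrbit u ≤ twoSidedOrbit v)
    (hv : v ∈ tildeSet K A) : u ∈ tildeSet K A := by
  haveI : FiniteDimensional K (twoSidedOrbit v) := hv
  exact Submodule.finiteDimensional_of_le h

lemma twoSidedOrbit_conv_le_left (w u : Module.Dual K A) :
    twoSidedOrbit (conv w u) ≤ twoSidedOrbit u := by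
  apply Submodule.span_le.2
  rintro x ⟨w₁, w₂, rfl⟩
  rw [show conv w₁ (conv (conv w u) w₂) = conv (conv w₁ w) (conv u w₂) by
    rw [conv_assoc w u w₂, ← conv_assoc w₁ w (conv u w₂)]]
  exact mem_twoSidedOrbit u (conv w₁ w) w₂

lemma twoSidedOrbit_conv_le_right (u w : Module.Dual K A) :
    twoSidedOrbit (conv u w) ≤ twoSidedOrbit u := by
  apply Submodule.span_le.2
  rintro x ⟨w₁, w₂, rfl⟩
  rw [conv_assoc u w w₂]
  exact mem_twoSidedOrbit u w₁ (conv w w₂)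

lemma twoSidedOrbit_smul_le (c : K) (u : Module.Dual K A) :
    twoSidedOrbit (c • u) ≤ twoSidedOrbit u := by
  apply Submodule.span_le.2
  rintro x ⟨w₁, w₂, rfl⟩
  rw [conv_smul_left, conv_smul_right]
  exact Submodule.smul_mem _ _ (mem_twoSidedOrbit u w₁ w₂)

lemma trace_smul_id {V : Type} [AddCommGroup V] [Module K V]
    (W : Submodule K V) [FiniteDimensional K W] (c : K) :
    LinearMap.trace K W (c • (LinearMap.id : W →ₗ[K] W)) = c * (Module.finrank K W : K) := by
  rw [map_smul, LinearMap.trace_id, smul_eq_mul]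

lemma trace_restrict_eq_of_le {V : Type} [AddCommGroup V] [Module K V]
    (f : V →ₗ[K] V) {W' W : Submodule K V} (hle : W' ≤ W) [FiniteDimensional K W]
    (h' : ∀ x ∈ W', f x ∈ W') (h : ∀ x ∈ W, f x ∈ W)
    (himg : ∀ x ∈ W, f x ∈ W') :
    LinearMap.trace K W (f.restrict h) = LinearMap.trace K W' (f.restrict h') := by
  haveI : FiniteDimensional K W' := Submodule.finiteDimensional_of_le hle
  let g : W →ₗ[K] W' := (f.domRestrict W).codRestrict W' (fun x => himg x x.2)
  let i : W' →ₗ[K] W := Submodule.inclusion hle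
  have h1 : i ∘ₗ g = f.restrict h := by ext x; rfl
  have h2 : g ∘ₗ i = f.restrict h' := by ext x; rfl
  rw [← h1, ← h2, LinearMap.trace_comp_comm']

lemma convTrace_eq_on (u : Module.Dual K A) (W : Submodule K (Module.Dual K A))
    [FiniteDimensional K W] (hle : rightOrbit u ≤ W)
    (hW : ∀ x ∈ W, convL u x ∈ W) :
    convTrace u = LinearMap.trace K W ((convL u).restrict hW) :=
  (trace_restrict_eq_of_le (convL u) hle (rightOrbit_mapsTo u) hW
    (fun x _ => conv_mem_rightOrbit u x)).symm

end AuxLemmas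

/-- If the polarity `φ : Ã → A**` is injective and `φ(w₀) = ι(1)` for some `w₀ ∈ Ã`, then
`w₀` is (left and right) invariant, `tr(w * w₀) = w(1) w₀(1)`, `w₀(1) = 1`; hence `w₀` is a
normalized invariant integral and `G = Spec A` is linearly semisimple. -/
theorem integral_of_polarity_injective_and_one_in_image
    (hinj : ∀ u ∈ tildeSet K A, ∀ v ∈ tildeSet K A,
      (∀ w : Module.Dual K A, convTrace (conv w u) = convTrace (conv w v)) → u = v)
    (w₀ : Module.Dual K A) (hw₀ : w₀ ∈ tildeSet K A)
    (hφ : ∀ w : Module.Dual K A, convTrace (conv w w₀) = w 1) :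
    (∀ w : Module.Dual K A, conv w w₀ = w 1 • w₀ ∧ conv w₀ w = w 1 • w₀) ∧
    (∀ w : Module.Dual K A, convTrace (conv w w₀) = w 1 * w₀ 1) ∧
    w₀ 1 = 1 ∧
    IsNormalizedIntegral w₀ := by
  classical
  have hε1 : (Coalgebra.counit : Module.Dual K A) (1 : A) = 1 := by simp
  -- membership in the ideal Ã
  have tconvl : ∀ w : Module.Dual K A, conv w w₀ ∈ tildeSet K A :=
    fun w => tilde_of_le (twoSidedOrbit_conv_le_left w w₀) hw₀
  have tconvr : ∀ w : Module.Dual K A, conv w₀ w ∈ tildeSet K A :=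
    fun w => tilde_of_le (twoSidedOrbit_conv_le_right w₀ w) hw₀
  have tsmul : ∀ c : K, c • w₀ ∈ tildeSet K A :=
    fun c => tilde_of_le (twoSidedOrbit_smul_le c w₀) hw₀
  -- left invariance
  have LI : ∀ w : Module.Dual K A, conv w w₀ = w 1 • w₀ := by
    intro w
    refine hinj _ (tconvl w) _ (tsmul (w 1)) ?_
    intro w'
    have l1 : conv w' (conv w w₀) = conv (conv w' w) w₀ := (conv_assoc _ _ _).symm
    have l2 : conv w' (w 1 • w₀) = conv (w 1 • w') w₀ := by
      rw [conv_smul_right, conv_smul_left]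
    rw [l1, l2, hφ, hφ, conv_one_apply]
    simp [mul_comm]
  -- tr(w₀) = 1
  have ct0 : convTrace w₀ = 1 := by
    have h := hφ (Coalgebra.counit : Module.Dual K A)
    rwa [counit_conv, hε1] at h
  -- the finite-dimensional invariant subspace W = w₀ * A*
  haveI hfin : FiniteDimensional K (twoSidedOrbit w₀) := hw₀
  have hWle : rightOrbit w₀ ≤ twoSidedOrbit w₀ := by
    apply Submodule.span_le.2
    rintro x ⟨w', rfl⟩
    rw [show conv w₀ w' = conv Coalgebra.counit (conv w₀ w') from (counit_conv _).symm]
    exact mem_twoSidedOrbit w₀ _ _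
  haveI : FiniteDimensional K (rightOrbit w₀) := Submodule.finiteDimensional_of_le hWle
  -- convolution on the left by any w acts on W as w(1) • id
  have hact : ∀ (w : Module.Dual K A), ∀ x ∈ rightOrbit w₀, conv w x = w 1 • x := by
    intro w x hx
    induction hx using Submodule.span_induction with
    | mem x hx =>
        obtain ⟨y, rfl⟩ := hx
        rw [← conv_assoc, LI w, conv_smul_left]
    | zero => rw [conv_zero_right, smul_zero]
    | add x y _ _ hx hy => rw [conv_add_right, hx, hy, smul_add]
    | smul c x _ hx => rw [conv_smul_right, hx, smul_comm]
  -- tr(w₀ * w) = w(1)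
  have key : ∀ w : Module.Dual K A, convTrace (conv w₀ w) = w 1 := by
    intro w
    have hle : rightOrbit (conv w₀ w) ≤ rightOrbit w₀ := by
      apply Submodule.span_le.2
      rintro x ⟨y, rfl⟩
      rw [conv_assoc]
      exact conv_mem_rightOrbit w₀ (conv w y)
    have hW : ∀ x ∈ rightOrbit w₀, convL (conv w₀ w) x ∈ rightOrbit w₀ := by
      intro x hx
      show conv (conv w₀ w) x ∈ _
      rw [conv_assoc]
      exact conv_mem_rightOrbit w₀ (conv w x)
    rw [convTrace_eq_on (conv w₀ w) (rightOrbit w₀) hle hW]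
    have hres : (convL (conv w₀ w)).restrict hW
        = w 1 • (convL w₀).restrict (rightOrbit_mapsTo w₀) := by
      apply LinearMap.ext
      intro x
      apply Subtype.ext
      show conv (conv w₀ w) (x : Module.Dual K A) = w 1 • conv w₀ (x : Module.Dual K A)
      rw [conv_assoc, hact w x x.2, conv_smul_right]
    rw [hres, map_smul]
    have : LinearMap.trace K (rightOrbit w₀) ((convL w₀).restrict (rightOrbit_mapsTo w₀))
        = convTrace w₀ := rfl
    rw [this, ct0, smul_eq_mul, mul_one]
  -- right invariance
  have RI : ∀ w : Module.Dual K A, conv w₀ w = w 1 • w₀ := by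
    intro w
    refine hinj _ (tconvr w) _ (tsmul (w 1)) ?_
    intro w'
    have l1 : conv w' (conv w₀ w) = conv w₀ (w' 1 • w) := by
      rw [← conv_assoc, LI w', conv_smul_left, ← conv_smul_right]
    have l2 : conv w' (w 1 • w₀) = conv (w 1 • w') w₀ := by
      rw [conv_smul_right, conv_smul_left]
    rw [l1, l2, key, hφ]
    simp [mul_comm]
  -- w₀ ≠ 0
  have hne : w₀ ≠ 0 := by
    intro h
    have h1 := ct0
    rw [h] at h1
    have z : convTrace (0 : Module.Dual K A) = 0 := by
      unfold convTrace
      have h0 : (convL (0 : Module.Dual K A)).restrict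
          (rightOrbit_mapsTo (0 : Module.Dual K A)) = 0 := by
        apply LinearMap.ext
        intro x
        apply Subtype.ext
        show conv 0 (x : Module.Dual K A) = 0
        exact conv_zero_left _
      rw [h0, map_zero]
    rw [z] at h1
    exact zero_ne_one h1
  -- rightOrbit w₀ = K ∙ w₀
  have horb : rightOrbit w₀ = (K ∙ w₀) := by
    apply le_antisymm
    · apply Submodule.span_le.2
      rintro x ⟨y, rfl⟩
      rw [RI y]
      exact Submodule.smul_mem _ _ (Submodule.mem_span_singleton_self w₀)
    · rw [Submodule.span_singleton_le_iff_mem]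
      exact Submodule.subset_span ⟨Coalgebra.counit, (conv_counit w₀).symm⟩
  have hrank : (Module.finrank K (rightOrbit w₀)) = 1 := by
    rw [horb]
    exact finrank_span_singleton hne
  -- w₀(1) = 1
  have hw01 : w₀ 1 = 1 := by
    have hres : (convL w₀).restrict (rightOrbit_mapsTo w₀)
        = w₀ 1 • (LinearMap.id : rightOrbit w₀ →ₗ[K] rightOrbit w₀) := by
      apply LinearMap.ext
      intro x
      apply Subtype.ext
      show conv w₀ (x : Module.Dual K A) = w₀ 1 • (x : Module.Dual K A)
      exact hact w₀ x x.2
    have h1 : convTrace w₀ = w₀ 1 := by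
      show LinearMap.trace K (rightOrbit w₀) ((convL w₀).restrict (rightOrbit_mapsTo w₀)) = _
      rw [hres, trace_smul_id, hrank]
      simp
    rw [ct0] at h1
    exact h1.symm
  exact ⟨fun w => ⟨LI w, RI w⟩,
    fun w => by rw [hφ, hw01, mul_one],
    hw01,
    ⟨hw01, fun w => ⟨LI w, RI w⟩⟩⟩


end
end

section
/- Suppose $\tilde A$ is dense in $A^*$. Then every two-sided ideal $I$ of the (possibly non-unital) $K$-algebra $\tilde A$ (a $K$-subspace $I \subseteq \tilde A$ with $\tilde A * I \subseteq I$ and $I * \tilde A \subseteq I$) is a left and right $A^*$-submodule of $A^*$: $w * x \in I$ and $x * w \in I$ for all $w \in A^*$ and $x \in I$. -/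
open TensorProduct

noncomputable section

variable {K : Type} [Field K] {A : Type} [CommRing A] [HopfAlgebra K A]

/-- `Ã` is dense in `A*` (for the weak linear topology): the only `a ∈ A` annihilated by all
of `Ã` is `0`. -/
def TildeDense (K : Type) [Field K] (A : Type) [CommRing A] [HopfAlgebra K A] : Prop :=
  ∀ a : A, (∀ u ∈ tildeSet K A, u a = 0) → a = 0

/-- The map `a ↦ ∑ a₍₁₎ x(a₍₂₎)`, so that `conv u x = u ∘ psiR x`. -/
def psiR (x : Module.Dual K A) : A →ₗ[K] A :=
  (TensorProduct.rid K A).toLinearMap ∘ₗ (x.lTensor A) ∘ₗ (Coalgebra.comul (R := K))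

/-- The map `a ↦ ∑ x(a₍₁₎) a₍₂₎`, so that `conv x u = u ∘ psiL x`. -/
def psiL (x : Module.Dual K A) : A →ₗ[K] A :=
  (TensorProduct.lid K A).toLinearMap ∘ₗ (x.rTensor A) ∘ₗ (Coalgebra.comul (R := K))

lemma conv_eq_psiR (u x : Module.Dual K A) : conv u x = u ∘ₗ psiR x := by
  ext a
  show (LinearMap.mul' K K) (TensorProduct.map u x (Coalgebra.comul a)) =
    u ((TensorProduct.rid K A) ((x.lTensor A) (Coalgebra.comul a)))
  generalize (Coalgebra.comul (R := K) a) = t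
  induction t using TensorProduct.induction_on with
  | zero => simp
  | tmul p q =>
      simp [LinearMap.mul'_apply, TensorProduct.rid_tmul, smul_eq_mul, mul_comm]
  | add s t hs ht => simp [hs, ht]

lemma conv_eq_psiL (x u : Module.Dual K A) : conv x u = u ∘ₗ psiL x := by
  ext a
  show (LinearMap.mul' K K) (TensorProduct.map x u (Coalgebra.comul a)) =
    u ((TensorProduct.lid K A) ((x.rTensor A) (Coalgebra.comul a)))
  generalize (Coalgebra.comul (R := K) a) = t
  induction t using TensorProduct.induction_on with
  | zero => simp
  | tmul p q =>
      simp [LinearMap.mul'_apply, TensorProduct.lid_tmul, smul_eq_mul, mul_comm]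
  | add s t hs ht => simp [hs, ht]

lemma conv_counit_right (x : Module.Dual K A) :
    conv x (Coalgebra.counit (R := K)) = x := by
  rw [conv_eq_psiR]
  ext a
  show x (psiR (Coalgebra.counit (R := K)) a) = x a
  have : psiR (Coalgebra.counit (R := K)) a = a := by
    show (TensorProduct.rid K A)
      ((Coalgebra.counit (R := K)).lTensor A (Coalgebra.comul a)) = a
    rw [Coalgebra.lTensor_counit_comul]
    simp
  rw [this]

lemma conv_counit_left (x : Module.Dual K A) :
    conv (Coalgebra.counit (R := K)) x = x := by
  rw [conv_eq_psiL]
  ext a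
  show x (psiL (Coalgebra.counit (R := K)) a) = x a
  have : psiL (Coalgebra.counit (R := K)) a = a := by
    show (TensorProduct.lid K A)
      ((Coalgebra.counit (R := K)).rTensor A (Coalgebra.comul a)) = a
    rw [Coalgebra.rTensor_counit_comul]
    simp
  rw [this]

/-- A functional annihilated by everything annihilating a finite-dimensional subspace `W`
of the dual belongs to `W`. -/
lemma mem_of_separation (W : Submodule K (Module.Dual K A)) (hW : FiniteDimensional K W)
    (v : Module.Dual K A) (H : ∀ a : A, (∀ y ∈ W, y a = 0) → v a = 0) : v ∈ W := by
  classical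
  haveI := hW
  haveI : Module.Free K W := Module.Free.of_divisionRing K W
  let b := Module.finBasis K W
  let L : Fin (Module.finrank K W) → Module.Dual K A := fun i => (b i : Module.Dual K A)
  have hspan : Submodule.span K (Set.range L) = W := by
    have : Set.range L = W.subtype '' (Set.range b) := by
      ext y; constructor
      · rintro ⟨i, rfl⟩; exact ⟨b i, ⟨i, rfl⟩, rfl⟩
      · rintro ⟨z, ⟨i, rfl⟩, rfl⟩; exact ⟨i, rfl⟩
    rw [this, ← Submodule.map_span, b.span_eq, Submodule.map_top, Submodule.range_subtype]
  have hker : ⨅ i, LinearMap.ker (L i) ≤ LinearMap.ker v := by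
    intro a ha
    simp only [Submodule.mem_iInf, LinearMap.mem_ker] at ha
    rw [LinearMap.mem_ker]
    apply H
    intro y hy
    have hsub : W ≤ LinearMap.ker (LinearMap.applyₗ (R := K) a) := by
      rw [← hspan]
      apply Submodule.span_le.2
      rintro _ ⟨i, rfl⟩
      exact ha i
    exact hsub hy
  have := mem_span_of_iInf_ker_le_ker hker
  rwa [hspan] at this

/-- If `Ã` is dense in `A*`, then every two-sided ideal `I` of the (possibly non-unital)
algebra `Ã` (a linear subspace of `A*` contained in `Ã` with `Ã * I ⊆ I` and `I * Ã ⊆ I`)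
is a left and right `A*`-submodule of `A*`. -/
theorem ideal_of_tilde_is_dual_submodule (hdense : TildeDense K A)
    (I : Submodule K (Module.Dual K A)) (hIle : (I : Set (Module.Dual K A)) ⊆ tildeSet K A)
    (hleft : ∀ u ∈ tildeSet K A, ∀ x ∈ I, conv u x ∈ I)
    (hright : ∀ u ∈ tildeSet K A, ∀ x ∈ I, conv x u ∈ I) :
    ∀ (w : Module.Dual K A), ∀ x ∈ I, conv w x ∈ I ∧ conv x w ∈ I := by
  intro w x hx
  have hxt : x ∈ tildeSet K A := hIle hx
  haveI hfin : FiniteDimensional K (twoSidedOrbit x) := hxt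
  constructor
  · -- left multiplication
    set WL : Submodule K (Module.Dual K A) :=
      Submodule.span K {y | ∃ u ∈ tildeSet K A, y = conv u x} with hWL
    have hWLle : WL ≤ twoSidedOrbit x := by
      apply Submodule.span_le.2
      rintro _ ⟨u, hu, rfl⟩
      exact Submodule.subset_span ⟨u, Coalgebra.counit, by rw [conv_counit_right]⟩
    haveI : FiniteDimensional K WL := Submodule.finiteDimensional_of_le hWLle
    have hmem : conv w x ∈ WL := by
      apply mem_of_separation WL inferInstance
      intro a ha
      have hψ : psiR x a = 0 := by
        apply hdense
        intro u hu
        have h0 : conv u x a = 0 := ha _ (Submodule.subset_span ⟨u, hu, rfl⟩)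
        rwa [conv_eq_psiR] at h0
      rw [conv_eq_psiR]
      show w (psiR x a) = 0
      rw [hψ, map_zero]
    have hWLI : WL ≤ I := by
      apply Submodule.span_le.2
      rintro _ ⟨u, hu, rfl⟩
      exact hleft u hu x hx
    exact hWLI hmem
  · -- right multiplication
    set WR : Submodule K (Module.Dual K A) :=
      Submodule.span K {y | ∃ u ∈ tildeSet K A, y = conv x u} with hWR
    have hWRle : WR ≤ twoSidedOrbit x := by
      apply Submodule.span_le.2
      rintro _ ⟨u, hu, rfl⟩
      exact Submodule.subset_span ⟨Coalgebra.counit, u, by rw [conv_counit_left]⟩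
    haveI : FiniteDimensional K WR := Submodule.finiteDimensional_of_le hWRle
    have hmem : conv x w ∈ WR := by
      apply mem_of_separation WR inferInstance
      intro a ha
      have hψ : psiL x a = 0 := by
        apply hdense
        intro u hu
        have h0 : conv x u a = 0 := ha _ (Submodule.subset_span ⟨u, hu, rfl⟩)
        rwa [conv_eq_psiL] at h0
      rw [conv_eq_psiL]
      show w (psiL x a) = 0
      rw [hψ, map_zero]
    have hWRI : WR ≤ I := by
      apply Submodule.span_le.2
      rintro _ ⟨u, hu, rfl⟩
      exact hright u hu x hx
    exact hWRI hmem

end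
end
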